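/- arXiv:2011.14176 — 9 statements merged into one kernel-verified Lean document; each statement's English description precedes it below -/
import Mathlib

section
/- Let R = ℂ[[t]] and let b₁,…,b₆ ∈ R with ∑ᵢ bᵢ = 0. Suppose a, b, c, d ∈ R satisfy: t ∣ c, t ∣ (d−a)(b₁+b₂) − (b₁+b₂)²·(c/t), and t ∣ (d−a)(b₁+b₂+b₃+b₄) − (b₁+b₂+b₃+b₄)²·(c/t), where c/t denotes the element c' with tc' = c. If t ∤ b₁+b₂, t ∤ b₃+b₄, and t ∤ b₅+b₆, then t ∣ (c/t) and t ∣ (d−a). -/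
open PowerSeries

abbrev R := PowerSeries ℂ

theorem stmt_2 (b₁ b₂ b₃ b₄ b₅ b₆ : R)
    (hsum : b₁ + b₂ + b₃ + b₄ + b₅ + b₆ = 0)
    (a b c d c' : R) (hc : X * c' = c)
    (h1 : X ∣ (d - a) * (b₁ + b₂) - (b₁ + b₂) ^ 2 * c')
    (h2 : X ∣ (d - a) * (b₁ + b₂ + b₃ + b₄) - (b₁ + b₂ + b₃ + b₄) ^ 2 * c')
    (hb12 : ¬ X ∣ b₁ + b₂) (hb34 : ¬ X ∣ b₃ + b₄) (hb56 : ¬ X ∣ b₅ + b₆) :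
    X ∣ c' ∧ X ∣ (d - a) := by
  rw [X_dvd_iff] at h1 h2 hb12 hb34 hb56
  rw [X_dvd_iff, X_dvd_iff]
  have hs := congrArg (constantCoeff (R := ℂ)) hsum
  simp only [map_add, map_sub, map_mul, map_pow, map_zero] at h1 h2 hb12 hb34 hb56 hs
  set C := constantCoeff (R := ℂ) c' with hCdef
  set D := constantCoeff (R := ℂ) d - constantCoeff (R := ℂ) a with hDdef
  set u := constantCoeff (R := ℂ) b₁ + constantCoeff (R := ℂ) b₂ with hu
  set v := constantCoeff (R := ℂ) b₃ + constantCoeff (R := ℂ) b₄ with hv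
  set w := constantCoeff (R := ℂ) b₅ + constantCoeff (R := ℂ) b₆ with hw
  have h1' : D * u = u ^ 2 * C := by linear_combination h1
  have h2' : D * (u + v) = (u + v) ^ 2 * C := by linear_combination h2
  have huv : u + v = -w := by linear_combination hs
  have huv0 : u + v ≠ 0 := by rw [huv]; exact neg_ne_zero.mpr hb56
  have hD : D = u * C := mul_right_cancel₀ hb12 (by linear_combination h1')
  have hC : C = 0 := by
    have : (u + v) * (v * C) = 0 := by linear_combination (u+v) * hD - h2'
    rcases mul_eq_zero.mp this with h | h
    · exact absurd h huv0
    · rcases mul_eq_zero.mp h with h' | h'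
      · exact absurd h' hb34
      · exact h'
  refine ⟨hC, ?_⟩
  rw [map_sub, show constantCoeff (R := ℂ) d - constantCoeff (R := ℂ) a = D from hDdef.symm, hD, hC, mul_zero]
end

section
/- Let R = ℂ[[t]] and let b₁,…,b₆ ∈ R with ∑ᵢ bᵢ = 0. If t ∣ b₅+b₆ and t ∤ b₁+b₂ and t ∤ b₃+b₄, then setting c = t·(b₁+b₂)⁻¹, the matrix φ = [[1, 0],[−c, 0]] over R is a nontrivial idempotent (φ² = φ, φ ≠ 0, φ ≠ 1) satisfying t ∣ (−c), t ∣ (0−1)(b₁+b₂) − (b₁+b₂)²·(−c/t), and t ∣ (0−1)(b₁+b₂+b₃+b₄) − (b₁+b₂+b₃+b₄)²·(−c/t). -/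
open PowerSeries Matrix

theorem stmt_3 (b₁ b₂ b₃ b₄ b₅ b₆ : R)
    (hsum : b₁ + b₂ + b₃ + b₄ + b₅ + b₆ = 0)
    (h56 : X ∣ b₅ + b₆) (h12 : ¬ X ∣ b₁ + b₂) (h34 : ¬ X ∣ b₃ + b₄) :
    ∀ c : R, c = X * Ring.inverse (b₁ + b₂) →
      ((!![1, 0; -c, 0] : Matrix (Fin 2) (Fin 2) R) * !![1, 0; -c, 0] = !![1, 0; -c, 0] ∧
        (!![1, 0; -c, 0] : Matrix (Fin 2) (Fin 2) R) ≠ 0 ∧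
        (!![1, 0; -c, 0] : Matrix (Fin 2) (Fin 2) R) ≠ 1 ∧
        X ∣ (-c) ∧
        ∃ c' : R, X * c' = -c ∧
          X ∣ (0 - 1) * (b₁ + b₂) - (b₁ + b₂) ^ 2 * c' ∧
          X ∣ (0 - 1) * (b₁ + b₂ + b₃ + b₄) - (b₁ + b₂ + b₃ + b₄) ^ 2 * c') := by
  intro c hc
  have hu : IsUnit (b₁ + b₂) := by
    rw [PowerSeries.X_dvd_iff] at h12
    exact PowerSeries.isUnit_iff_constantCoeff.mpr (isUnit_iff_ne_zero.mpr h12)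
  have hinv : (b₁ + b₂) * Ring.inverse (b₁ + b₂) = 1 := Ring.mul_inverse_cancel _ hu
  refine ⟨?_, ?_, ?_, ?_, ?_⟩
  · ext i j
    fin_cases i <;> fin_cases j <;> simp [Matrix.mul_apply, Fin.sum_univ_two]
  · intro h
    have := congrFun (congrFun h 0) 0
    simp at this
  · intro h
    have := congrFun (congrFun h 1) 1
    simp at this
  · exact ⟨-Ring.inverse (b₁ + b₂), by rw [hc]; ring⟩
  · refine ⟨-Ring.inverse (b₁ + b₂), by rw [hc]; ring, ?_, ?_⟩
    · have : (0 - 1) * (b₁ + b₂) - (b₁ + b₂) ^ 2 * -Ring.inverse (b₁ + b₂) = 0 := by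
        have : (b₁ + b₂) ^ 2 * Ring.inverse (b₁ + b₂) = b₁ + b₂ := by
          rw [sq, mul_assoc, hinv, mul_one]
        linear_combination this
      rw [this]
      exact dvd_zero _
    · have h1234 : X ∣ (b₁ + b₂ + b₃ + b₄) := by
        have : b₁ + b₂ + b₃ + b₄ = -(b₅ + b₆) := by linear_combination hsum
        rw [this]
        exact dvd_neg.mpr h56
      obtain ⟨k, hk⟩ := h1234
      rw [hk]
      exact ⟨-k + X * k ^ 2 * Ring.inverse (b₁ + b₂), by ring⟩
end

section
/- Let R = ℂ[[t]] and let (b₁,…,b₆) and (c₁,…,c₆) be tuples in R, each summing to zero, and such that none of b₁+b₂, b₃+b₄, b₅+b₆, c₁+c₂, c₃+c₄, c₅+c₆ is divisible by t. Set α₀ = ((c₁+c₂)(b₃+b₄)(c₅+c₆)) / ((b₁+b₂)(c₃+c₄)(b₅+b₆)), δ₀ = 1, β₀ = 0, and γ₀ = t·((c₃+c₄)(b₅+b₆) − (b₃+b₄)(c₅+c₆)) / ((b₁+b₂)(c₃+c₄)(b₅+b₆)). Then the matrix [[α₀, β₀],[γ₀, δ₀]] is invertible over R, t ∣ γ₀,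 and it satisfies −α₀(b₁+b₂) + (c₁+c₂)δ₀ − (b₁+b₂)(c₁+c₂)(γ₀/t) = 0 and α₀(b₅+b₆) − (c₅+c₆)δ₀ − (b₅+b₆)(c₅+c₆)(γ₀/t) = 0. -/
open PowerSeries Matrix

theorem stmt_5 (b₁ b₂ b₃ b₄ b₅ b₆ c₁ c₂ c₃ c₄ c₅ c₆ : R)
    (hbsum : b₁ + b₂ + b₃ + b₄ + b₅ + b₆ = 0)
    (hcsum : c₁ + c₂ + c₃ + c₄ + c₅ + c₆ = 0)
    (hb12 : ¬ X ∣ b₁ + b₂) (hb34 : ¬ X ∣ b₃ + b₄) (hb56 : ¬ X ∣ b₅ + b₆)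
    (hc12 : ¬ X ∣ c₁ + c₂) (hc34 : ¬ X ∣ c₃ + c₄) (hc56 : ¬ X ∣ c₅ + c₆)
    (α₀ β₀ γ₀ δ₀ : R)
    (hα : α₀ = (c₁ + c₂) * (b₃ + b₄) * (c₅ + c₆) *
        Ring.inverse ((b₁ + b₂) * (c₃ + c₄) * (b₅ + b₆)))
    (hδ : δ₀ = 1) (hβ : β₀ = 0)
    (hγ : γ₀ = X * (((c₃ + c₄) * (b₅ + b₆) - (b₃ + b₄) * (c₅ + c₆)) *
        Ring.inverse ((b₁ + b₂) * (c₃ + c₄) * (b₅ + b₆)))) :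
    IsUnit (!![α₀, β₀; γ₀, δ₀] : Matrix (Fin 2) (Fin 2) R) ∧
    X ∣ γ₀ ∧
    ∃ g : R, X * g = γ₀ ∧
      -α₀ * (b₁ + b₂) + (c₁ + c₂) * δ₀ - (b₁ + b₂) * (c₁ + c₂) * g = 0 ∧
      α₀ * (b₅ + b₆) - (c₅ + c₆) * δ₀ - (b₅ + b₆) * (c₅ + c₆) * g = 0 := by
  have hu : ∀ f : R, ¬ X ∣ f → IsUnit f := fun f h => by
    rw [PowerSeries.X_dvd_iff] at h
    exact PowerSeries.isUnit_iff_constantCoeff.mpr (isUnit_iff_ne_zero.mpr h)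
  have hD : IsUnit ((b₁ + b₂) * (c₃ + c₄) * (b₅ + b₆)) :=
    ((hu _ hb12).mul (hu _ hc34)).mul (hu _ hb56)
  have hDi : (b₁ + b₂) * (c₃ + c₄) * (b₅ + b₆) *
      Ring.inverse ((b₁ + b₂) * (c₃ + c₄) * (b₅ + b₆)) = 1 :=
    Ring.mul_inverse_cancel _ hD
  refine ⟨?_, ⟨_, hγ⟩, ((c₃ + c₄) * (b₅ + b₆) - (b₃ + b₄) * (c₅ + c₆)) *
      Ring.inverse ((b₁ + b₂) * (c₃ + c₄) * (b₅ + b₆)), hγ.symm, ?_, ?_⟩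
  · rw [Matrix.isUnit_iff_isUnit_det, Matrix.det_fin_two_of, hβ, hδ, hα]
    simp only [mul_one, zero_mul, sub_zero]
    exact (((hu _ hc12).mul (hu _ hb34)).mul (hu _ hc56)).mul
      (isUnit_ringInverse.mpr hD)
  · rw [hα, hδ]
    calc -((c₁ + c₂) * (b₃ + b₄) * (c₅ + c₆) *
          Ring.inverse ((b₁ + b₂) * (c₃ + c₄) * (b₅ + b₆))) * (b₁ + b₂) +
        (c₁ + c₂) * 1 - (b₁ + b₂) * (c₁ + c₂) *
          (((c₃ + c₄) * (b₅ + b₆) - (b₃ + b₄) * (c₅ + c₆)) *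
            Ring.inverse ((b₁ + b₂) * (c₃ + c₄) * (b₅ + b₆)))
        = (-((c₁ + c₂) * (b₃ + b₄) * (c₅ + c₆)) * (b₁ + b₂) +
            (c₁ + c₂) * ((b₁ + b₂) * (c₃ + c₄) * (b₅ + b₆)) -
            (b₁ + b₂) * (c₁ + c₂) *
              ((c₃ + c₄) * (b₅ + b₆) - (b₃ + b₄) * (c₅ + c₆))) *
          Ring.inverse ((b₁ + b₂) * (c₃ + c₄) * (b₅ + b₆)) := by
          rw [← hDi]; ring
      _ = 0 := by
          have : -((c₁ + c₂) * (b₃ + b₄) * (c₅ + c₆)) * (b₁ + b₂) +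
              (c₁ + c₂) * ((b₁ + b₂) * (c₃ + c₄) * (b₅ + b₆)) -
              (b₁ + b₂) * (c₁ + c₂) *
                ((c₃ + c₄) * (b₅ + b₆) - (b₃ + b₄) * (c₅ + c₆)) = 0 := by ring
          rw [this, zero_mul]
  · rw [hα, hδ]
    calc (c₁ + c₂) * (b₃ + b₄) * (c₅ + c₆) *
          Ring.inverse ((b₁ + b₂) * (c₃ + c₄) * (b₅ + b₆)) * (b₅ + b₆) -
        (c₅ + c₆) * 1 - (b₅ + b₆) * (c₅ + c₆) *
          (((c₃ + c₄) * (b₅ + b₆) - (b₃ + b₄) * (c₅ + c₆)) *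
            Ring.inverse ((b₁ + b₂) * (c₃ + c₄) * (b₅ + b₆)))
        = ((c₁ + c₂) * (b₃ + b₄) * (c₅ + c₆) * (b₅ + b₆) -
            (c₅ + c₆) * ((b₁ + b₂) * (c₃ + c₄) * (b₅ + b₆)) -
            (b₅ + b₆) * (c₅ + c₆) *
              ((c₃ + c₄) * (b₅ + b₆) - (b₃ + b₄) * (c₅ + c₆))) *
          Ring.inverse ((b₁ + b₂) * (c₃ + c₄) * (b₅ + b₆)) := by
          rw [← hDi]; ring
      _ = 0 := by
          have : (c₁ + c₂) * (b₃ + b₄) * (c₅ + c₆) * (b₅ + b₆) -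
              (c₅ + c₆) * ((b₁ + b₂) * (c₃ + c₄) * (b₅ + b₆)) -
              (b₅ + b₆) * (c₅ + c₆) *
                ((c₃ + c₄) * (b₅ + b₆) - (b₃ + b₄) * (c₅ + c₆)) = 0 := by
            linear_combination ((c₅ + c₆) * (b₃ + b₄) * (b₅ + b₆)) * hcsum -
              ((c₅ + c₆) * (c₃ + c₄) * (b₅ + b₆)) * hbsum
          rw [this, zero_mul]
end

section
/- Let R = ℂ[[t]] and fix positive integers l₁, l₂, l₃. Let B₁, B₂, B₃, D₁, D₂, D₃ ∈ R with (B₁+D₁)+(B₂+D₂)+(B₃+D₃) = 0 (here Bg+Dg plays the role of B_{i_g}+B_{j_g}). There exist α₁, α₂, α₃ ∈ R satisfying t^{l₃}α₃ − t^{l₁}α₁ = B₁+D₁, t^{l₂}α₂ − t^{l₃}α₃ = B₃+D₃, and t^{l₁}α₁ − t^{l₂}α₂ = B₂+D₂, if and only if t^{min(l₀ᵍ, lᵍ)} divides Bg+Dg for g = 1,2,3, where (l₀¹,l₀²,l₀³) = (l₃,l₁,l₂). -/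
open PowerSeries

theorem stmt_7 (l₁ l₂ l₃ : ℕ) (hl₁ : 0 < l₁) (hl₂ : 0 < l₂) (hl₃ : 0 < l₃)
    (B₁ B₂ B₃ D₁ D₂ D₃ : R)
    (hsum : (B₁ + D₁) + (B₂ + D₂) + (B₃ + D₃) = 0) :
    (∃ α₁ α₂ α₃ : R,
        X ^ l₃ * α₃ - X ^ l₁ * α₁ = B₁ + D₁ ∧
        X ^ l₂ * α₂ - X ^ l₃ * α₃ = B₃ + D₃ ∧
        X ^ l₁ * α₁ - X ^ l₂ * α₂ = B₂ + D₂) ↔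
      (X ^ (min l₃ l₁) ∣ B₁ + D₁ ∧
       X ^ (min l₁ l₂) ∣ B₂ + D₂ ∧
       X ^ (min l₂ l₃) ∣ B₃ + D₃) := by
  constructor
  · rintro ⟨α₁, α₂, α₃, h1, h2, h3⟩
    refine ⟨?_, ?_, ?_⟩
    · rw [← h1]
      exact dvd_sub (dvd_mul_of_dvd_left (pow_dvd_pow X (min_le_left _ _)) _)
        (dvd_mul_of_dvd_left (pow_dvd_pow X (min_le_right _ _)) _)
    · rw [← h3]
      exact dvd_sub (dvd_mul_of_dvd_left (pow_dvd_pow X (min_le_left _ _)) _)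
        (dvd_mul_of_dvd_left (pow_dvd_pow X (min_le_right _ _)) _)
    · rw [← h2]
      exact dvd_sub (dvd_mul_of_dvd_left (pow_dvd_pow X (min_le_left _ _)) _)
        (dvd_mul_of_dvd_left (pow_dvd_pow X (min_le_right _ _)) _)
  · rintro ⟨⟨a₀, ha⟩, ⟨b₀, hb⟩, ⟨c₀, hc⟩⟩
    rcases le_total l₂ l₁ with h21 | h12
    · rcases le_total l₃ l₁ with h31 | h13
      · -- l₁ is the max
        rw [min_eq_left h31] at ha
        rw [min_eq_right h21] at hb
        exact ⟨0, -b₀, a₀, by rw [ha]; ring,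
          by linear_combination ha + hb - hsum, by rw [hb]; ring⟩
      · -- l₃ is the max (l₂ ≤ l₁ ≤ l₃)
        rw [min_eq_right h13] at ha
        rw [min_eq_left (h21.trans h13)] at hc
        exact ⟨-a₀, c₀, 0, by rw [ha]; ring, by rw [hc]; ring,
          by linear_combination ha + hc - hsum⟩
    · rcases le_total l₃ l₂ with h32 | h23
      · -- l₂ is the max
        rw [min_eq_left h12] at hb
        rw [min_eq_right h32] at hc
        exact ⟨b₀, 0, -c₀, by linear_combination hb + hc - hsum,
          by rw [hc]; ring, by rw [hb]; ring⟩
      · -- l₃ is the max (l₁ ≤ l₂ ≤ l₃)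
        rw [min_eq_right (h12.trans h23)] at ha
        rw [min_eq_left h23] at hc
        exact ⟨-a₀, c₀, 0, by rw [ha]; ring, by rw [hc]; ring,
          by linear_combination ha + hc - hsum⟩
end

section
/- Let l₁ ≤ l₂ ≤ l₃ be positive integers. The number of triples (s₁, s₂, s₃) of nonnegative integers with s₁ < l₁, s₂ < l₁ (i.e. s₂ < min(l₁,l₂)), s₃ < l₂ (i.e. s₃ < min(l₂,l₃)), and such that the minimum of {s₁, s₂, s₃} is attained at least twice, equals l₁·(l₂ + (l₁−1)/2) = (l₁(l₁−1))/2 + l₁·l₂. -/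
open Finset in
lemma inner_count (x y l₂ : ℕ) (hx : x < l₂) (hy : y < l₂) :
    ((Finset.range l₂).filter (fun z =>
        (x = y ∧ x ≤ z) ∨ (x = z ∧ x ≤ y) ∨ (y = z ∧ y ≤ x))).card
      = if x = y then l₂ - x else 1 := by
  rcases eq_or_ne x y with rfl | hne
  · have : (Finset.range l₂).filter (fun z =>
        (x = x ∧ x ≤ z) ∨ (x = z ∧ x ≤ x) ∨ (x = z ∧ x ≤ x)) = Finset.Ico x l₂ := by
      ext z
      simp only [Finset.mem_filter, Finset.mem_range, Finset.mem_Ico, true_and, and_true, le_refl]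
      omega
    rw [this, Nat.card_Ico, if_pos rfl]
  · rw [if_neg hne]
    rcases lt_or_gt_of_ne hne with h | h
    · have : (Finset.range l₂).filter (fun z =>
          (x = y ∧ x ≤ z) ∨ (x = z ∧ x ≤ y) ∨ (y = z ∧ y ≤ x)) = {x} := by
        ext z
        simp only [Finset.mem_filter, Finset.mem_range, Finset.mem_singleton]
        omega
      rw [this, Finset.card_singleton]
    · have : (Finset.range l₂).filter (fun z =>
          (x = y ∧ x ≤ z) ∨ (x = z ∧ x ≤ y) ∨ (y = z ∧ y ≤ x)) = {y} := by
        ext z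
        simp only [Finset.mem_filter, Finset.mem_range, Finset.mem_singleton]
        omega
      rw [this, Finset.card_singleton]

theorem stmt_9 (l₁ l₂ l₃ : ℕ) (hl₁ : 0 < l₁) (h12 : l₁ ≤ l₂) (h23 : l₂ ≤ l₃) :
    ((Finset.range l₁ ×ˢ Finset.range l₁ ×ˢ Finset.range l₂).filter
        (fun p : ℕ × ℕ × ℕ =>
          (p.1 = p.2.1 ∧ p.1 ≤ p.2.2) ∨
          (p.1 = p.2.2 ∧ p.1 ≤ p.2.1) ∨
          (p.2.1 = p.2.2 ∧ p.2.1 ≤ p.1))).card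
      = l₁ * (l₁ - 1) / 2 + l₁ * l₂ := by
  classical
  rw [Finset.card_filter, Finset.sum_product]
  have step1 : ∀ x ∈ Finset.range l₁,
      (∑ y ∈ Finset.range l₁ ×ˢ Finset.range l₂,
        if (x = y.1 ∧ x ≤ y.2) ∨ (x = y.2 ∧ x ≤ y.1) ∨ (y.1 = y.2 ∧ y.1 ≤ x) then 1 else 0)
      = l₁ + (l₂ - x - 1) := by
    intro x hx
    rw [Finset.mem_range] at hx
    rw [Finset.sum_product]
    have step2 : ∀ y ∈ Finset.range l₁,
        (∑ z ∈ Finset.range l₂,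
          if (x = y ∧ x ≤ z) ∨ (x = z ∧ x ≤ y) ∨ (y = z ∧ y ≤ x) then 1 else 0)
        = if x = y then l₂ - x else 1 := by
      intro y hy
      rw [Finset.mem_range] at hy
      rw [← Finset.card_filter]
      exact inner_count x y l₂ (lt_of_lt_of_le hx h12) (lt_of_lt_of_le hy h12)
    rw [Finset.sum_congr rfl step2]
    have : ∀ y, (if x = y then l₂ - x else 1) = 1 + (if x = y then l₂ - x - 1 else 0) := by
      intro y
      split <;> omega
    simp_rw [this]
    rw [Finset.sum_add_distrib, Finset.sum_const, Finset.card_range, smul_eq_mul, mul_one]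
    rw [Finset.sum_ite_eq (Finset.range l₁) x (fun _ => l₂ - x - 1),
      if_pos (Finset.mem_range.mpr hx)]
  rw [Finset.sum_congr rfl step1, Finset.sum_add_distrib, Finset.sum_const,
    Finset.card_range, smul_eq_mul]
  have refl : ∑ x ∈ Finset.range l₁, (l₂ - x - 1)
      = ∑ x ∈ Finset.range l₁, (l₂ - l₁ + x) := by
    rw [← Finset.sum_range_reflect (fun x => l₂ - l₁ + x) l₁]
    apply Finset.sum_congr rfl
    intro x hx
    rw [Finset.mem_range] at hx
    omega
  rw [refl, Finset.sum_add_distrib, Finset.sum_const, Finset.card_range, smul_eq_mul]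
  rw [Finset.sum_range_id]
  have hmul : l₁ * (l₂ - l₁) = l₁ * l₂ - l₁ * l₁ := Nat.mul_sub l₁ l₂ l₁
  have hle : l₁ * l₁ ≤ l₁ * l₂ := Nat.mul_le_mul_left l₁ h12
  omega
end

section
/- Let R = ℂ[[t]] and let b₁,…,b₈ ∈ R with ∑ᵢ bᵢ = 0. Suppose a, b, c, d ∈ R satisfy t ∣ c, t ∣ (d−a)(b₁+b₂) − (b₁+b₂)²(c/t), t ∣ (d−a)(b₁+b₂+b₃+b₄) − (b₁+b₂+b₃+b₄)²(c/t), and t ∣ (d−a)(b₁+⋯+b₆) − (b₁+⋯+b₆)²(c/t). If t ∤ b₁+b₂, t ∤ b₃+b₄, t ∤ b₅+b₆, and t ∣ b₇+b₈, and if the matrix [[a,b],[c,d]] is idempotent, then this matrix is either 0 or the identity. -/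
open PowerSeries Matrix

theorem stmt_11 (b₁ b₂ b₃ b₄ b₅ b₆ b₇ b₈ : R)
    (hsum : b₁ + b₂ + b₃ + b₄ + b₅ + b₆ + b₇ + b₈ = 0)
    (a b c d c' : R) (hc : X * c' = c)
    (h1 : X ∣ (d - a) * (b₁ + b₂) - (b₁ + b₂) ^ 2 * c')
    (h2 : X ∣ (d - a) * (b₁ + b₂ + b₃ + b₄) - (b₁ + b₂ + b₃ + b₄) ^ 2 * c')
    (h3 : X ∣ (d - a) * (b₁ + b₂ + b₃ + b₄ + b₅ + b₆) -
        (b₁ + b₂ + b₃ + b₄ + b₅ + b₆) ^ 2 * c')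
    (hb12 : ¬ X ∣ b₁ + b₂) (hb34 : ¬ X ∣ b₃ + b₄) (hb56 : ¬ X ∣ b₅ + b₆)
    (hb78 : X ∣ b₇ + b₈)
    (hidem : (!![a, b; c, d] : Matrix (Fin 2) (Fin 2) R) * !![a, b; c, d] = !![a, b; c, d]) :
    (!![a, b; c, d] : Matrix (Fin 2) (Fin 2) R) = 0 ∨
    (!![a, b; c, d] : Matrix (Fin 2) (Fin 2) R) = 1 := by
  -- constant coefficients
  simp only [PowerSeries.X_dvd_iff, map_sub, _root_.map_mul, map_add, map_pow] at h1 h2 h3 hb12 hb34 hb56 hb78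
  set a0 := (constantCoeff (R := ℂ)) a with ha0
  set d0 := (constantCoeff (R := ℂ)) d with hd0
  set k := (constantCoeff (R := ℂ)) c' with hk
  set U1 := (constantCoeff (R := ℂ)) b₁
  set U2 := (constantCoeff (R := ℂ)) b₂
  set U3 := (constantCoeff (R := ℂ)) b₃
  set U4 := (constantCoeff (R := ℂ)) b₄
  -- from h1, h2 : d0 = a0
  have hU : U1 + U2 ≠ 0 := hb12
  have hV : U3 + U4 ≠ 0 := hb34
  have hUV : U1 + U2 + U3 + U4 ≠ 0 := by
    have hs : (constantCoeff (R := ℂ)) (b₁ + b₂ + b₃ + b₄ + b₅ + b₆ + b₇ + b₈) = 0 := by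
      rw [hsum]; simp
    simp only [map_add] at hs
    intro h
    apply hb56
    linear_combination hs - h - hb78
  have hda : d0 = a0 := by
    have e1 : (d0 - a0) = (U1 + U2) * k := by
      have h : ((d0 - a0) - (U1 + U2) * k) * (U1 + U2) = 0 := by linear_combination h1
      rcases mul_eq_zero.1 h with h | h
      · exact sub_eq_zero.mp h
      · exact absurd h hU
    have e2 : (d0 - a0) = (U1 + U2 + U3 + U4) * k := by
      have h : ((d0 - a0) - (U1 + U2 + U3 + U4) * k) * (U1 + U2 + U3 + U4) = 0 := by
        linear_combination h2
      rcases mul_eq_zero.1 h with h | h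
      · exact sub_eq_zero.mp h
      · exact absurd h hUV
    have hk0 : k = 0 := by
      have : (U3 + U4) * k = 0 := by linear_combination e1 - e2
      rcases mul_eq_zero.1 this with h | h
      · exact absurd h hV
      · exact h
    have h0 : d0 - a0 = 0 := by rw [e1, hk0, mul_zero]
    exact sub_eq_zero.mp h0
  -- entry equations from idempotency
  rw [Matrix.mul_fin_two] at hidem
  have e11 : a * a + b * c = a := by simpa using congrFun (congrFun hidem 0) 0
  have e12 : a * b + b * d = b := by simpa using congrFun (congrFun hidem 0) 1
  have e21 : c * a + d * c = c := by simpa using congrFun (congrFun hidem 1) 0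
  have e22 : c * b + d * d = d := by simpa using congrFun (congrFun hidem 1) 1
  have hcc : (constantCoeff (R := ℂ)) c = 0 := by rw [← hc]; simp
  have hbc : b = 0 ∨ a + d - 1 = 0 :=
    mul_eq_zero.1 (show b * (a + d - 1) = 0 by linear_combination e12)
  rcases hbc with hb | had
  · -- b = 0
    subst hb
    have ha2 : a = 0 ∨ a - 1 = 0 := mul_eq_zero.1 (show a * (a - 1) = 0 by linear_combination e11)
    have hd2 : d = 0 ∨ d - 1 = 0 := mul_eq_zero.1 (show d * (d - 1) = 0 by linear_combination e22)
    rcases ha2 with ha | ha <;> rcases hd2 with hd | hd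
    · -- a = 0, d = 0
      have hc0 : c = 0 := by rw [ha, hd] at e21; linear_combination -e21
      left
      ext i j
      fin_cases i <;> fin_cases j <;> simp [ha, hd, hc0]
    · -- a = 0, d = 1 : contradiction
      exfalso
      have hd1 : d = 1 := sub_eq_zero.mp hd
      rw [ha0, hd0, ha, hd1, map_zero, _root_.map_one] at hda
      exact one_ne_zero hda
    · -- a = 1, d = 0 : contradiction
      exfalso
      have ha1 : a = 1 := sub_eq_zero.mp ha
      rw [ha0, hd0, ha1, hd, map_zero, _root_.map_one] at hda
      exact one_ne_zero hda.symm
    · -- a = 1, d = 1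
      have ha1 : a = 1 := sub_eq_zero.mp ha
      have hd1 : d = 1 := sub_eq_zero.mp hd
      have hc0 : c = 0 := by rw [ha1, hd1] at e21; linear_combination e21
      right
      rw [ha1, hd1, hc0, Matrix.one_fin_two]
  · -- a + d = 1 : contradiction
    exfalso
    have had' := congrArg ((constantCoeff (R := ℂ))) had
    simp only [map_sub, map_add, _root_.map_one, map_zero] at had'
    have had0 : a0 + d0 = 1 := by rw [ha0, hd0]; linear_combination had'
    have hdd : d0 ^ 2 = d0 := by
      have h := congrArg ((constantCoeff (R := ℂ))) e22
      simp only [map_add, _root_.map_mul] at h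
      rw [hcc] at h
      rw [hd0]
      linear_combination h
    have hdh : d0 = 1 / 2 := by linear_combination (had0 + hda) / 2
    rw [hdh] at hdd
    norm_num at hdd
end

section
/- Let R = ℂ[[t]] and let b₁,…,b₈ ∈ R with ∑ᵢ bᵢ = 0, such that t ∤ bᵢ+bᵢ₊₁ for i = 1,3,5,7, and t ∣ bᵢ+bᵢ₊₁+bᵢ₊₂+bᵢ₊₃ for i = 1,3,5,7 (indices cyclic mod 8). Then setting c = t(b₁+b₂)⁻¹, the matrix [[1,0],[−c,0]] is a nontrivial idempotent satisfying t ∣ −c, t ∣ (0−1)(b₁+b₂) − (b₁+b₂)²(−c/t), t ∣ (0−1)(b₁+b₂+b₃+b₄) − (b₁+b₂+b₃+b₄)²(−c/t), and t ∣ (0−1)(b₁+⋯+b₆) − (b₁+⋯+b₆)²(−c/t). -/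
open PowerSeries Matrix

theorem stmt_13 (b₁ b₂ b₃ b₄ b₅ b₆ b₇ b₈ : R)
    (hsum : b₁ + b₂ + b₃ + b₄ + b₅ + b₆ + b₇ + b₈ = 0)
    (h12 : ¬ X ∣ b₁ + b₂) (h34 : ¬ X ∣ b₃ + b₄)
    (h56 : ¬ X ∣ b₅ + b₆) (h78 : ¬ X ∣ b₇ + b₈)
    (h1234 : X ∣ b₁ + b₂ + b₃ + b₄)
    (h3456 : X ∣ b₃ + b₄ + b₅ + b₆)
    (h5678 : X ∣ b₅ + b₆ + b₇ + b₈)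
    (h7812 : X ∣ b₇ + b₈ + b₁ + b₂) :
    ∀ c : R, c = X * Ring.inverse (b₁ + b₂) →
      ((!![1, 0; -c, 0] : Matrix (Fin 2) (Fin 2) R) * !![1, 0; -c, 0] = !![1, 0; -c, 0] ∧
        (!![1, 0; -c, 0] : Matrix (Fin 2) (Fin 2) R) ≠ 0 ∧
        (!![1, 0; -c, 0] : Matrix (Fin 2) (Fin 2) R) ≠ 1 ∧
        X ∣ (-c) ∧
        ∃ c' : R, X * c' = -c ∧
          X ∣ (0 - 1) * (b₁ + b₂) - (b₁ + b₂) ^ 2 * c' ∧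
          X ∣ (0 - 1) * (b₁ + b₂ + b₃ + b₄) - (b₁ + b₂ + b₃ + b₄) ^ 2 * c' ∧
          X ∣ (0 - 1) * (b₁ + b₂ + b₃ + b₄ + b₅ + b₆) -
            (b₁ + b₂ + b₃ + b₄ + b₅ + b₆) ^ 2 * c') := by
  intro c hc
  have hcc : constantCoeff (R := ℂ) (b₁ + b₂) ≠ 0 := by
    rw [PowerSeries.X_dvd_iff] at h12; exact h12
  have hunit : IsUnit (b₁ + b₂) :=
    PowerSeries.isUnit_iff_constantCoeff.mpr (isUnit_iff_ne_zero.mpr hcc)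
  have huv : (b₁ + b₂) * Ring.inverse (b₁ + b₂) = 1 :=
    Ring.mul_inverse_cancel _ hunit
  have hvne : Ring.inverse (b₁ + b₂) ≠ 0 := by
    intro h; rw [h, mul_zero] at huv; exact (zero_ne_one (α := R)) huv
  have hcne : c ≠ 0 := by
    rw [hc]
    exact mul_ne_zero (PowerSeries.X_ne_zero : (X : R) ≠ 0) hvne
  refine ⟨?_, ?_, ?_, ?_, -(Ring.inverse (b₁ + b₂)), ?_, ?_, ?_, ?_⟩
  · ext i j
    fin_cases i <;> fin_cases j <;>
      simp [Matrix.mul_apply, Fin.sum_univ_two]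
  · intro h
    have := congrFun (congrFun h 0) 0
    simp at this
  · intro h
    have := congrFun (congrFun h 1) 0
    simp [Matrix.one_apply] at this
    exact hcne this
  · exact ⟨-(Ring.inverse (b₁ + b₂)), by rw [hc]; ring⟩
  · rw [hc]; ring
  · have h0 : (0 - 1) * (b₁ + b₂) - (b₁ + b₂) ^ 2 * -(Ring.inverse (b₁ + b₂)) = 0 := by
      have h2 : (b₁ + b₂) ^ 2 * Ring.inverse (b₁ + b₂) = b₁ + b₂ := by
        rw [pow_two, mul_assoc, huv, mul_one]
      rw [mul_neg, h2]; ring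
    rw [h0]
    exact dvd_zero _
  · rw [PowerSeries.X_dvd_iff] at h1234 ⊢
    simp only [map_sub, _root_.map_mul, map_pow, map_add, map_zero, _root_.map_one,
      map_neg] at h1234 ⊢
    linear_combination ((constantCoeff (R := ℂ) b₁ + constantCoeff (R := ℂ) b₂ + constantCoeff (R := ℂ) b₃ +
      constantCoeff (R := ℂ) b₄) * constantCoeff (R := ℂ) (Ring.inverse (b₁ + b₂)) - 1) * h1234
  · rw [PowerSeries.X_dvd_iff] at h7812 ⊢
    have hsum' := congrArg (constantCoeff (R := ℂ)) hsum
    have hvcc := congrArg (constantCoeff (R := ℂ)) huv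
    simp only [map_sub, _root_.map_mul, map_pow, map_add, map_zero, _root_.map_one,
      map_neg] at h7812 hsum' hvcc ⊢
    set a1 := constantCoeff (R := ℂ) b₁
    set a2 := constantCoeff (R := ℂ) b₂
    set a3 := constantCoeff (R := ℂ) b₃
    set a4 := constantCoeff (R := ℂ) b₄
    set a5 := constantCoeff (R := ℂ) b₅
    set a6 := constantCoeff (R := ℂ) b₆
    set V := constantCoeff (R := ℂ) (Ring.inverse (b₁ + b₂))
    linear_combination ((a1 + a2 + a3 + a4 + a5 + a6 + a1 + a2) * V - 1) * hsum' -
      ((a1 + a2 + a3 + a4 + a5 + a6 + a1 + a2) * V - 1) * h7812 + (a1 + a2) * hvcc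
end

section
/- Let R = ℂ[[t]] and let b₁,…,b₈, c₁,…,c₈ ∈ R, each 8-tuple summing to zero, with t ∤ bᵢ+bᵢ₊₁ and t ∤ cᵢ+cᵢ₊₁ for i = 1,3,5,7, and t ∤ bᵢ+bᵢ₊₁+bᵢ₊₂+bᵢ₊₃ and t ∤ cᵢ+cᵢ₊₁+cᵢ₊₂+cᵢ₊₃ for i = 1,3,5,7 (cyclically). If there exist α, β, γ, δ ∈ R with αδ − βγ a unit, t ∣ γ, and satisfying t ∣ −α(b₁+b₂)+(c₁+c₂)δ−(b₁+b₂)(c₁+c₂)(γ/t), t ∣ −α(b₁+b₂+b₃+b₄)+(c₁+c₂+c₃+c₄)δ−(b₁+b₂+b₃+b₄)(c₁+c₂+c₃+c₄)(γ/t), and t ∣ α(b₇+b₈)−(c₇+c₈)δ−(b₇+b₈)(c₇+c₈)(γ/t), then t ∣ (b₁+b₂)(c₃+c₄)(b₅+b₆)(c₇+c₈) − (c₁+c₂)(b₃+b₄)(c₅+c₆)(b₇+b₈). -/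
open PowerSeries Matrix

theorem stmt_14 (b₁ b₂ b₃ b₄ b₅ b₆ b₇ b₈ c₁ c₂ c₃ c₄ c₅ c₆ c₇ c₈ : R)
    (hbsum : b₁ + b₂ + b₃ + b₄ + b₅ + b₆ + b₇ + b₈ = 0)
    (hcsum : c₁ + c₂ + c₃ + c₄ + c₅ + c₆ + c₇ + c₈ = 0)
    (hb12 : ¬ X ∣ b₁ + b₂) (hb34 : ¬ X ∣ b₃ + b₄)
    (hb56 : ¬ X ∣ b₅ + b₆) (hb78 : ¬ X ∣ b₇ + b₈)
    (hc12 : ¬ X ∣ c₁ + c₂) (hc34 : ¬ X ∣ c₃ + c₄)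
    (hc56 : ¬ X ∣ c₅ + c₆) (hc78 : ¬ X ∣ c₇ + c₈)
    (hb1234 : ¬ X ∣ b₁ + b₂ + b₃ + b₄)
    (hb3456 : ¬ X ∣ b₃ + b₄ + b₅ + b₆)
    (hb5678 : ¬ X ∣ b₅ + b₆ + b₇ + b₈)
    (hb7812 : ¬ X ∣ b₇ + b₈ + b₁ + b₂)
    (hc1234 : ¬ X ∣ c₁ + c₂ + c₃ + c₄)
    (hc3456 : ¬ X ∣ c₃ + c₄ + c₅ + c₆)
    (hc5678 : ¬ X ∣ c₅ + c₆ + c₇ + c₈)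
    (hc7812 : ¬ X ∣ c₇ + c₈ + c₁ + c₂)
    (hex : ∃ α β γ δ g : R, IsUnit (α * δ - β * γ) ∧ X ∣ γ ∧ X * g = γ ∧
        X ∣ (-α * (b₁ + b₂) + (c₁ + c₂) * δ - (b₁ + b₂) * (c₁ + c₂) * g) ∧
        X ∣ (-α * (b₁ + b₂ + b₃ + b₄) + (c₁ + c₂ + c₃ + c₄) * δ -
          (b₁ + b₂ + b₃ + b₄) * (c₁ + c₂ + c₃ + c₄) * g) ∧
        X ∣ (α * (b₇ + b₈) - (c₇ + c₈) * δ - (b₇ + b₈) * (c₇ + c₈) * g)) :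
    X ∣ ((b₁ + b₂) * (c₃ + c₄) * (b₅ + b₆) * (c₇ + c₈) -
      (c₁ + c₂) * (b₃ + b₄) * (c₅ + c₆) * (b₇ + b₈)) := by
  obtain ⟨α, β, γ, δ, g, hu, hγ, hg, h1, h2, h3⟩ := hex
  rw [PowerSeries.X_dvd_iff] at hb12 hc12 hγ h1 h2 h3 ⊢
  simp only [map_add, map_sub, _root_.map_mul, map_neg] at hb12 hc12 h1 h2 h3 ⊢
  have hbs : (PowerSeries.constantCoeff (R := ℂ)) b₁ + (PowerSeries.constantCoeff (R := ℂ)) b₂ + (PowerSeries.constantCoeff (R := ℂ)) b₃ + (PowerSeries.constantCoeff (R := ℂ)) b₄ + (PowerSeries.constantCoeff (R := ℂ)) b₅ + (PowerSeries.constantCoeff (R := ℂ)) b₆ + (PowerSeries.constantCoeff (R := ℂ)) b₇ + (PowerSeries.constantCoeff (R := ℂ)) b₈ = 0 := by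
    have := congrArg (PowerSeries.constantCoeff (R := ℂ)) hbsum
    simpa using this
  have hcs : (PowerSeries.constantCoeff (R := ℂ)) c₁ + (PowerSeries.constantCoeff (R := ℂ)) c₂ + (PowerSeries.constantCoeff (R := ℂ)) c₃ + (PowerSeries.constantCoeff (R := ℂ)) c₄ + (PowerSeries.constantCoeff (R := ℂ)) c₅ + (PowerSeries.constantCoeff (R := ℂ)) c₆ + (PowerSeries.constantCoeff (R := ℂ)) c₇ + (PowerSeries.constantCoeff (R := ℂ)) c₈ = 0 := by
    have := congrArg (PowerSeries.constantCoeff (R := ℂ)) hcsum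
    simpa using this
  have hu' : IsUnit (((PowerSeries.constantCoeff (R := ℂ)) α) * ((PowerSeries.constantCoeff (R := ℂ)) δ) - (PowerSeries.constantCoeff (R := ℂ)) β * (PowerSeries.constantCoeff (R := ℂ)) γ) := by
    have := hu.map (PowerSeries.constantCoeff (R := ℂ))
    simpa using this
  rw [hγ] at hu'
  have hxy : ((PowerSeries.constantCoeff (R := ℂ)) α) * ((PowerSeries.constantCoeff (R := ℂ)) δ) ≠ 0 := by simpa using hu'.ne_zero
  have key : ((PowerSeries.constantCoeff (R := ℂ)) α) * ((PowerSeries.constantCoeff (R := ℂ)) δ) * ((PowerSeries.constantCoeff (R := ℂ)) b₁ + (PowerSeries.constantCoeff (R := ℂ)) b₂) * ((PowerSeries.constantCoeff (R := ℂ)) c₁ + (PowerSeries.constantCoeff (R := ℂ)) c₂) * (((PowerSeries.constantCoeff (R := ℂ)) b₁ + (PowerSeries.constantCoeff (R := ℂ)) b₂) * ((PowerSeries.constantCoeff (R := ℂ)) c₃ + (PowerSeries.constantCoeff (R := ℂ)) c₄) * ((PowerSeries.constantCoeff (R := ℂ)) b₅ + (PowerSeries.constantCoeff (R := ℂ)) b₆)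 * ((PowerSeries.constantCoeff (R := ℂ)) c₇ + (PowerSeries.constantCoeff (R := ℂ)) c₈) - ((PowerSeries.constantCoeff (R := ℂ)) c₁ + (PowerSeries.constantCoeff (R := ℂ)) c₂) * ((PowerSeries.constantCoeff (R := ℂ)) b₃ + (PowerSeries.constantCoeff (R := ℂ)) b₄) * ((PowerSeries.constantCoeff (R := ℂ)) c₅ + (PowerSeries.constantCoeff (R := ℂ)) c₆) * ((PowerSeries.constantCoeff (R := ℂ)) b₇ + (PowerSeries.constantCoeff (R := ℂ)) b₈)) = 0 := by
    linear_combination (((PowerSeries.constantCoeff (R := ℂ)) α) * (((PowerSeries.constantCoeff (R := ℂ)) b₁ + (PowerSeries.constantCoeff (R := ℂ)) b₂) * ((PowerSeries.constantCoeff (R := ℂ)) b₇ + (PowerSeries.constantCoeff (R := ℂ)) b₈) * (((PowerSeries.constantCoeff (R := ℂ)) c₁ + (PowerSeries.constantCoeff (R := ℂ)) c₂) + ((PowerSeries.constantCoeff (R := ℂ)) c₇ + (PowerSeries.constantCoeff (R := ℂ)) c₈))) * (((PowerSeries.constantCoeff (R := ℂ)) b₁ + (PowerSeries.constantCoeff (R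 := ℂ)) b₂) + ((PowerSeries.constantCoeff (R := ℂ)) b₃ + (PowerSeries.constantCoeff (R := ℂ)) b₄)) * (((PowerSeries.constantCoeff (R := ℂ)) c₁ + (PowerSeries.constantCoeff (R := ℂ)) c₂) + ((PowerSeries.constantCoeff (R := ℂ)) c₃ + (PowerSeries.constantCoeff (R := ℂ)) c₄)) - ((PowerSeries.constantCoeff (R := ℂ)) α) * (((PowerSeries.constantCoeff (R := ℂ)) b₁ + (PowerSeries.constantCoeff (R := ℂ)) b₂) * ((PowerSeries.constantCoeff (R := ℂ)) c₃ + (PowerSeries.constantCoeff (R := ℂ)) c₄) * (((PowerSeries.constantCoeff (R := ℂ)) b₁ + (PowerSeries.constantCoeff (R := ℂ)) b₂) + ((PowerSeries.constantCoeff (R := ℂ)) b₃ + (PowerSeries.constantCoeff (R := ℂ)) b₄))) * ((PowerSeries.constantCoeff (R := ℂ)) b₇ + (PowerSeries.constantCoeff (R := ℂ)) b₈) * ((PowerSeries.constantCoeff (R := ℂ)) c₇ + (PowerSeries.constantCoeff (R := ℂ)) c₈)) * h1 + (-(((PowerSeries.constantCoeff (R := ℂ)) α) * (((PowerSeries.constantCoeff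 (R := ℂ)) b₁ + (PowerSeries.constantCoeff (R := ℂ)) b₂) * ((PowerSeries.constantCoeff (R := ℂ)) b₇ + (PowerSeries.constantCoeff (R := ℂ)) b₈) * (((PowerSeries.constantCoeff (R := ℂ)) c₁ + (PowerSeries.constantCoeff (R := ℂ)) c₂) + ((PowerSeries.constantCoeff (R := ℂ)) c₇ + (PowerSeries.constantCoeff (R := ℂ)) c₈))) * ((PowerSeries.constantCoeff (R := ℂ)) b₁ + (PowerSeries.constantCoeff (R := ℂ)) b₂) * ((PowerSeries.constantCoeff (R := ℂ)) c₁ + (PowerSeries.constantCoeff (R := ℂ)) c₂))) * h2 + (((PowerSeries.constantCoeff (R := ℂ)) α) * (((PowerSeries.constantCoeff (R := ℂ)) b₁ + (PowerSeries.constantCoeff (R := ℂ)) b₂) * ((PowerSeries.constantCoeff (R := ℂ)) c₃ + (PowerSeries.constantCoeff (R := ℂ)) c₄) * (((PowerSeries.constantCoeff (R := ℂ)) b₁ + (PowerSeries.constantCoeff (R := ℂ)) b₂) + ((PowerSeries.constantCoeff (R := ℂ)) b₃ + (PowerSeries.constantCoeff (R := ℂ)) b₄))) * ((PowerSeries.constantCoeff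 (R := ℂ)) b₁ + (PowerSeries.constantCoeff (R := ℂ)) b₂) * ((PowerSeries.constantCoeff (R := ℂ)) c₁ + (PowerSeries.constantCoeff (R := ℂ)) c₂)) * h3 + (((PowerSeries.constantCoeff (R := ℂ)) α) * ((PowerSeries.constantCoeff (R := ℂ)) δ) * ((PowerSeries.constantCoeff (R := ℂ)) b₁ + (PowerSeries.constantCoeff (R := ℂ)) b₂) * ((PowerSeries.constantCoeff (R := ℂ)) c₁ + (PowerSeries.constantCoeff (R := ℂ)) c₂) * ((PowerSeries.constantCoeff (R := ℂ)) b₁ + (PowerSeries.constantCoeff (R := ℂ)) b₂) * ((PowerSeries.constantCoeff (R := ℂ)) c₃ + (PowerSeries.constantCoeff (R := ℂ)) c₄) * ((PowerSeries.constantCoeff (R := ℂ)) c₇ + (PowerSeries.constantCoeff (R := ℂ)) c₈)) * hbs - (((PowerSeries.constantCoeff (R := ℂ)) α) * ((PowerSeries.constantCoeff (R := ℂ)) δ) * ((PowerSeries.constantCoeff (R := ℂ)) b₁ + (PowerSeries.constantCoeff (R := ℂ)) b₂) * ((PowerSeries.constantCoeff (R := ℂ)) c₁ + (PowerSeries.constantCoeff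 (R := ℂ)) c₂) * ((PowerSeries.constantCoeff (R := ℂ)) c₁ + (PowerSeries.constantCoeff (R := ℂ)) c₂) * ((PowerSeries.constantCoeff (R := ℂ)) b₃ + (PowerSeries.constantCoeff (R := ℂ)) b₄) * ((PowerSeries.constantCoeff (R := ℂ)) b₇ + (PowerSeries.constantCoeff (R := ℂ)) b₈)) * hcs
  have hne : ((PowerSeries.constantCoeff (R := ℂ)) α) * ((PowerSeries.constantCoeff (R := ℂ)) δ) * ((PowerSeries.constantCoeff (R := ℂ)) b₁ + (PowerSeries.constantCoeff (R := ℂ)) b₂) * ((PowerSeries.constantCoeff (R := ℂ)) c₁ + (PowerSeries.constantCoeff (R := ℂ)) c₂) ≠ 0 := mul_ne_zero (mul_ne_zero hxy hb12) hc12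
  exact (mul_eq_zero.mp key).resolve_left hne
end

section
/- Let R = ℂ[[t]] and let b₁,…,b₈ ∈ R with ∑bᵢ = 0, t ∤ bᵢ+bᵢ₊₁ for i = 1,3,5,7, and t ∤ b₁+b₂+b₃+b₄. If a, b, c, d ∈ R satisfy t ∣ c, t ∣ (d−a)(b₁+b₂) − (b₁+b₂)²(c/t), and t ∣ (d−a)(b₁+b₂+b₃+b₄) − (b₁+b₂+b₃+b₄)²(c/t), and the matrix [[a,b],[c,d]] is idempotent, then it is 0 or the identity. -/
open PowerSeries Matrix

theorem stmt_18 (b₁ b₂ b₃ b₄ b₅ b₆ b₇ b₈ : R)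
    (hsum : b₁ + b₂ + b₃ + b₄ + b₅ + b₆ + b₇ + b₈ = 0)
    (h12 : ¬ X ∣ b₁ + b₂) (h34 : ¬ X ∣ b₃ + b₄)
    (h56 : ¬ X ∣ b₅ + b₆) (h78 : ¬ X ∣ b₇ + b₈)
    (h1234 : ¬ X ∣ b₁ + b₂ + b₃ + b₄)
    (a b c d c' : R) (hc : X * c' = c)
    (hd1 : X ∣ (d - a) * (b₁ + b₂) - (b₁ + b₂) ^ 2 * c')
    (hd2 : X ∣ (d - a) * (b₁ + b₂ + b₃ + b₄) - (b₁ + b₂ + b₃ + b₄) ^ 2 * c')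
    (hidem : (!![a, b; c, d] : Matrix (Fin 2) (Fin 2) R) * !![a, b; c, d] = !![a, b; c, d]) :
    (!![a, b; c, d] : Matrix (Fin 2) (Fin 2) R) = 0 ∨
    (!![a, b; c, d] : Matrix (Fin 2) (Fin 2) R) = 1 := by
  have hp : Prime (X : R) := PowerSeries.X_prime
  have hX1 : ¬ (X : R) ∣ 1 := fun h => hp.not_unit (isUnit_of_dvd_one h)
  -- entry equations
  have h00 : a * a + b * c = a := by
    have := congr_fun (congr_fun hidem 0) 0
    simpa [Matrix.mul_apply, Fin.sum_univ_two] using this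
  have h01 : a * b + b * d = b := by
    have := congr_fun (congr_fun hidem 0) 1
    simpa [Matrix.mul_apply, Fin.sum_univ_two] using this
  have h10 : c * a + d * c = c := by
    have := congr_fun (congr_fun hidem 1) 0
    simpa [Matrix.mul_apply, Fin.sum_univ_two] using this
  have h11 : c * b + d * d = d := by
    have := congr_fun (congr_fun hidem 1) 1
    simpa [Matrix.mul_apply, Fin.sum_univ_two] using this
  have hXc : (X : R) ∣ c := ⟨c', hc.symm⟩
  -- X ∣ c'
  have hkey : (X : R) ∣ (b₁ + b₂) * ((b₁ + b₂ + b₃ + b₄) * ((b₃ + b₄) * c')) := by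
    have h := dvd_sub (hd1.mul_left (b₁ + b₂ + b₃ + b₄)) (hd2.mul_left (b₁ + b₂))
    have heq : (b₁ + b₂ + b₃ + b₄) * ((d - a) * (b₁ + b₂) - (b₁ + b₂) ^ 2 * c')
        - (b₁ + b₂) * ((d - a) * (b₁ + b₂ + b₃ + b₄) - (b₁ + b₂ + b₃ + b₄) ^ 2 * c')
        = (b₁ + b₂) * ((b₁ + b₂ + b₃ + b₄) * ((b₃ + b₄) * c')) := by ring
    rwa [heq] at h
  have hXc' : (X : R) ∣ c' := by
    rcases hp.dvd_or_dvd hkey with h | h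
    · exact absurd h h12
    rcases hp.dvd_or_dvd h with h | h
    · exact absurd h h1234
    rcases hp.dvd_or_dvd h with h | h
    · exact absurd h h34
    exact h
  have hXda : (X : R) ∣ d - a := by
    have h : (X : R) ∣ (d - a) * (b₁ + b₂) := by
      have := dvd_add hd1 (hXc'.mul_left ((b₁ + b₂) ^ 2))
      simpa using this
    rcases hp.dvd_or_dvd h with h | h
    · exact h
    · exact absurd h h12
  have hXa : (X : R) ∣ a * (1 - a) := by
    have : a * (1 - a) = b * c := by linear_combination -h00
    rw [this]
    exact hXc.mul_left b
  rcases hp.dvd_or_dvd hXa with hXa0 | hXa1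
  · -- case X ∣ a : matrix is 0
    left
    have hXd : (X : R) ∣ d := by
      have : d = (d - a) + a := by ring
      rw [this]; exact dvd_add hXda hXa0
    have hs : a + d - 1 ≠ 0 := by
      intro h
      apply hX1
      have : (1 : R) = a + d := by linear_combination -h
      rw [this]; exact dvd_add hXa0 hXd
    have hb : b = 0 := by
      have : b * (a + d - 1) = 0 := by linear_combination h01
      rcases mul_eq_zero.mp this with h | h
      · exact h
      · exact absurd h hs
    have hc0 : c = 0 := by
      have : c * (a + d - 1) = 0 := by linear_combination h10
      rcases mul_eq_zero.mp this with h | h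
      · exact h
      · exact absurd h hs
    have ha0 : a = 0 := by
      have : a * (a - 1) = 0 := by linear_combination h00 - c * hb
      rcases mul_eq_zero.mp this with h | h
      · exact h
      · exfalso; apply hX1
        have : (1 : R) = a - (a - 1) := by ring
        rw [this]; exact dvd_sub hXa0 (h ▸ dvd_zero _)
    have hd0 : d = 0 := by
      have : d * (d - 1) = 0 := by linear_combination h11 - b * hc0
      rcases mul_eq_zero.mp this with h | h
      · exact h
      · exfalso; apply hX1
        have : (1 : R) = d - (d - 1) := by ring
        rw [this]; exact dvd_sub hXd (h ▸ dvd_zero _)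
    ext i j
    fin_cases i <;> fin_cases j <;> simp [ha0, hb, hc0, hd0]
  · -- case X ∣ 1 - a : matrix is 1
    right
    have hXd1 : (X : R) ∣ 1 - d := by
      have : (1 : R) - d = (1 - a) - (d - a) := by ring
      rw [this]; exact dvd_sub hXa1 hXda
    have hs : a + d - 1 ≠ 0 := by
      intro h
      apply hX1
      have : (1 : R) = (1 - a) + (1 - d) + (a + d - 1) := by ring
      rw [this, h, add_zero]
      exact dvd_add hXa1 hXd1
    have hb : b = 0 := by
      have : b * (a + d - 1) = 0 := by linear_combination h01
      rcases mul_eq_zero.mp this with h | h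
      · exact h
      · exact absurd h hs
    have hc0 : c = 0 := by
      have : c * (a + d - 1) = 0 := by linear_combination h10
      rcases mul_eq_zero.mp this with h | h
      · exact h
      · exact absurd h hs
    have ha0 : a = 1 := by
      have : a * (a - 1) = 0 := by linear_combination h00 - c * hb
      rcases mul_eq_zero.mp this with h | h
      · exfalso; apply hX1
        have : (1 : R) = (1 - a) + a := by ring
        rw [this]; exact dvd_add hXa1 (h ▸ dvd_zero _)
      · linear_combination h
    have hd0 : d = 1 := by
      have : d * (d - 1) = 0 := by linear_combination h11 - b * hc0
      rcases mul_eq_zero.mp this with h | h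
      · exfalso; apply hX1
        have : (1 : R) = (1 - d) + d := by ring
        rw [this]; exact dvd_add hXd1 (h ▸ dvd_zero _)
      · linear_combination h
    ext i j
    fin_cases i <;> fin_cases j <;> simp [ha0, hb, hc0, hd0, Matrix.one_apply]
end
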